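/- Let (c_n)_{n≥1} ⊆ (0,1) with associated RWPS (P_n)_{n≥0} and switched RWPS (P̃_n)_{n≥0}. Then the following are equivalent: (a) both (P_n) and (P̃_n) satisfy nonnegative linearization of products and both Haar functions h and h̃ are increasing (h(n) ≤ h(n+1) and h̃(n) ≤ h̃(n+1) for all n ≥ 0); (b) c_n = 1/2 for all n ≥ 1 (i.e., (P_n) is the Chebyshev sequence of the first kind). -/
import Mathlib


open Polynomial

/-- `Q` satisfies nonnegative linearization of products. -/
def NonnegLin (Q : ℕ → Polynomial ℝ) : Prop :=
  ∀ m n : ℕ, ∃ g : ℕ → ℝ,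
    (∀ k, k ≤ m + n → 0 ≤ g k) ∧
    Q m * Q n = ∑ k ∈ Finset.range (m + n + 1), C (g k) * Q k

/-- `P` is the random walk polynomial sequence associated with `c` (with `a n = 1 - c n`). -/
def IsRWPS (c : ℕ → ℝ) (P : ℕ → Polynomial ℝ) : Prop :=
  P 0 = 1 ∧ P 1 = X ∧
  ∀ n, 1 ≤ n → X * P n = C (1 - c n) * P (n + 1) + C (c n) * P (n - 1)

/-- `P` is the switched random walk polynomial sequence associated with `c`
(the roles of `a n = 1 - c n` and `c n` are interchanged). -/
def IsSwitchedRWPS (c : ℕ → ℝ) (P : ℕ → Polynomial ℝ) : Prop :=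
  P 0 = 1 ∧ P 1 = X ∧
  ∀ n, 1 ≤ n → X * P n = C (c n) * P (n + 1) + C (1 - c n) * P (n - 1)

/-- Key extraction lemma: if the nonnegative linearization identity holds for `P 2 * P 2`
for a random-walk-type sequence whose first three recurrence coefficients alternate as
`B, 1 - B, B`, then `B ≤ 1/2`. -/
lemma keylem (B : ℝ) (hB0 : 0 < B) (hB1 : B < 1) (P : ℕ → Polynomial ℝ)
    (h0 : P 0 = 1) (h1 : P 1 = X)
    (r1 : X * P 1 = C (1 - B) * P 2 + C B * P 0)
    (r2 : X * P 2 = C B * P 3 + C (1 - B) * P 1)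
    (r3 : X * P 3 = C (1 - B) * P 4 + C B * P 2)
    (g : ℕ → ℝ) (hg2 : 0 ≤ g 2)
    (hE : P 2 * P 2 = ∑ k ∈ Finset.range 5, C (g k) * P k) : B ≤ 1 / 2 := by
  set A : ℝ := 1 - B with hA
  have hApos : 0 < A := by simp [hA]; linarith
  simp only [Finset.sum_range_succ, Finset.sum_range_zero, zero_add] at hE
  simp only [h0, h1, mul_one] at r1 r2 r3 hE
  have q2 : C A * P 2 = X ^ 2 - C B := by linear_combination -r1
  have q3 : C A * (C B * P 3) = X ^ 3 - C B * X - C A * C A * X := by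
    linear_combination X * q2 - C A * r2
  have q4 : C A * (C A * (C B * P 4)) =
      X ^ 4 - C B * X ^ 2 - C A * C A * X ^ 2 - C B * C B * X ^ 2 + C B * C B * C B := by
    linear_combination X * q3 - (C A * C B) * r3 - (C B * C B) * q2
  have hE2 : C B * X ^ 4 - C B * C B * X ^ 2 - C B * C B * X ^ 2 + C B * C B * C B =
      C A * (C A * (C B * C (g 0))) + C A * (C A * (C B * (C (g 1) * X)))
      + C A * (C B * (C (g 2) * (X ^ 2 - C B)))
      + C A * (C (g 3) * (X ^ 3 - C B * X - C A * C A * X))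
      + C (g 4) * (X ^ 4 - C B * X ^ 2 - C A * C A * X ^ 2 - C B * C B * X ^ 2
          + C B * C B * C B) := by
    linear_combination (C A * C A * C B) * hE
      - (C B * (C A * P 2 + (X ^ 2 - C B))) * q2
      + (C (g 2) * C B * C A) * q2 + (C (g 3) * C A) * q3 + C (g 4) * q4
  have h4 := congrArg (fun p : Polynomial ℝ => p.coeff 4) hE2
  have h2 := congrArg (fun p : Polynomial ℝ => p.coeff 2) hE2
  simp only [mul_assoc, coeff_add, coeff_sub, coeff_C_mul, coeff_X_pow, coeff_C, coeff_X,
    coeff_one, mul_ite, mul_one, mul_zero] at h4 h2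
  norm_num at h4 h2
  nlinarith [h4, h2, hg2, hApos, hB0, hB1, mul_pos hApos hB0, sq_nonneg (A - B),
    mul_nonneg (mul_nonneg hApos.le hB0.le) hg2]

/-- Chebyshev product formula: `P m * P n = (P (m+n) + P (m-n)) / 2`. -/
lemma chebprod (P : ℕ → Polynomial ℝ) (h0 : P 0 = 1) (h1 : P 1 = X)
    (hr : ∀ l : ℕ, X * P (l + 1) = C (1/2 : ℝ) * P (l + 2) + C (1/2 : ℝ) * P l) :
    ∀ n m j : ℕ, m = n + j →
      P m * P n = C (1/2 : ℝ) * P (m + n) + C (1/2 : ℝ) * P j := by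
  have hu : C (1/2 : ℝ) + C (1/2 : ℝ) = 1 := by rw [← C_add]; norm_num
  have main : ∀ n : ℕ,
      (∀ m j : ℕ, m = n + j → P m * P n = C (1/2 : ℝ) * P (m + n) + C (1/2 : ℝ) * P j) ∧
      (∀ m j : ℕ, m = (n + 1) + j →
        P m * P (n + 1) = C (1/2 : ℝ) * P (m + (n + 1)) + C (1/2 : ℝ) * P j) := by
    intro n
    induction n with
    | zero =>
      constructor
      · intro m j hm
        have hj : m = j := by omega
        subst hj
        rw [h0, Nat.add_zero]
        linear_combination (-(P m)) * hu
      · intro m j hm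
        have hm' : m = j + 1 := by omega
        subst hm'
        rw [h1, show j + 1 + 1 = j + 2 from by omega]
        linear_combination hr j
    | succ n ih =>
      refine ⟨ih.2, ?_⟩
      intro m j hm
      have e1 := hr n
      have e2 := ih.2 m (j + 1) (by omega)
      have e3 := ih.1 m (j + 2) (by omega)
      have e4 := hr (m + n)
      have e5 := hr j
      rw [show m + (n + 1) = m + n + 1 from by omega] at e2
      rw [show m + (n + 1 + 1) = m + n + 2 from by omega,
        show n + 1 + 1 = n + 2 from by omega]
      linear_combination 2 * X * e2 - 2 * (P m) * e1 + 2 * C (1/2 : ℝ) * e4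
        + 2 * C (1/2 : ℝ) * e5 - 2 * C (1/2 : ℝ) * e3
        - (P m * P (n + 2) - C (1/2 : ℝ) * P (m + n + 2) - C (1/2 : ℝ) * P j) * hu
  intro n m j hm
  exact (main n).1 m j hm

/-- A Chebyshev-type sequence satisfies nonnegative linearization. -/
lemma NL_of_cheb (P : ℕ → Polynomial ℝ) (h0 : P 0 = 1) (h1 : P 1 = X)
    (hr : ∀ l : ℕ, X * P (l + 1) = C (1/2 : ℝ) * P (l + 2) + C (1/2 : ℝ) * P l) :
    NonnegLin P := by
  have aux : ∀ m n : ℕ, n ≤ m → ∃ g : ℕ → ℝ,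
      (∀ k, k ≤ m + n → 0 ≤ g k) ∧
      P m * P n = ∑ k ∈ Finset.range (m + n + 1), C (g k) * P k := by
    intro m n hnm
    refine ⟨fun k => (if k = m + n then (1/2 : ℝ) else 0) + (if k = m - n then (1/2 : ℝ) else 0),
      fun k _ => by positivity, ?_⟩
    have hsum : ∑ k ∈ Finset.range (m + n + 1),
        C ((if k = m + n then (1/2 : ℝ) else 0) + (if k = m - n then (1/2 : ℝ) else 0)) * P k
        = C (1/2 : ℝ) * P (m + n) + C (1/2 : ℝ) * P (m - n) := by
      have step : ∀ k ∈ Finset.range (m + n + 1),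
          C ((if k = m + n then (1/2 : ℝ) else 0) + (if k = m - n then (1/2 : ℝ) else 0)) * P k
          = (if k = m + n then C (1/2 : ℝ) * P k else 0)
            + (if k = m - n then C (1/2 : ℝ) * P k else 0) := by
        intro k _
        rw [map_add, add_mul]
        congr 1 <;> split_ifs <;> simp
      rw [Finset.sum_congr rfl step, Finset.sum_add_distrib,
        Finset.sum_ite_eq' _ (m + n), Finset.sum_ite_eq' _ (m - n)]
      rw [if_pos (by simp), if_pos (by simp [Finset.mem_range]; omega)]
    rw [hsum]
    exact chebprod P h0 h1 hr n m (m - n) (by omega)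
  intro m n
  rcases le_total n m with hnm | hmn
  · exact aux m n hnm
  · obtain ⟨g, hg, he⟩ := aux n m hmn
    refine ⟨g, fun k hk => hg k (by omega), ?_⟩
    rw [mul_comm, show m + n = n + m from Nat.add_comm m n]
    exact he

theorem stmt6 (c h ht : ℕ → ℝ) (P Pt : ℕ → Polynomial ℝ)
    (hc : ∀ n, 1 ≤ n → c n ∈ Set.Ioo (0 : ℝ) 1)
    (hP : IsRWPS c P) (hPt : IsSwitchedRWPS c Pt)
    (hh0 : h 0 = 1) (hh1 : h 1 = 1 / c 1)
    (hhrec : ∀ n, 1 ≤ n → h (n + 1) = h n * (1 - c n) / c (n + 1))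
    (hht0 : ht 0 = 1) (hht1 : ht 1 = 1 / (1 - c 1))
    (hhtrec : ∀ n, 1 ≤ n → ht (n + 1) = ht n * c n / (1 - c (n + 1))) :
    (NonnegLin P ∧ NonnegLin Pt ∧
        (∀ n : ℕ, h n ≤ h (n + 1)) ∧ (∀ n : ℕ, ht n ≤ ht (n + 1)))
      ↔ (∀ n, 1 ≤ n → c n = 1 / 2) := by
  obtain ⟨hP0, hP1, hPr⟩ := hP
  obtain ⟨hPt0, hPt1, hPtr⟩ := hPt
  constructor
  · rintro ⟨hNLP, hNLPt, hmh, hmht⟩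
    -- positivity of the Haar functions
    have hpos : ∀ n, 0 < h n := by
      intro n
      induction n with
      | zero => rw [hh0]; norm_num
      | succ k ih =>
        rcases Nat.eq_zero_or_pos k with rfl | hk
        · rw [hh1]
          have h1 := (hc 1 le_rfl).1
          positivity
        · rw [hhrec k hk]
          have h1 := (hc k hk).2
          have h2 := (hc (k + 1) (by omega)).1
          have h3 : (0:ℝ) < 1 - c k := by linarith
          exact div_pos (mul_pos ih h3) h2
    have htpos : ∀ n, 0 < ht n := by
      intro n
      induction n with
      | zero => rw [hht0]; norm_num
      | succ k ih =>
        rcases Nat.eq_zero_or_pos k with rfl | hk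
        · rw [hht1]
          have h1 := (hc 1 le_rfl).2
          have h2 : (0:ℝ) < 1 - c 1 := by linarith
          positivity
        · rw [hhtrec k hk]
          have h1 := (hc k hk).1
          have h2 := (hc (k + 1) (by omega)).2
          have h3 : (0:ℝ) < 1 - c (k + 1) := by linarith
          exact div_pos (mul_pos ih h1) h3
    -- the monotonicity of both Haar functions forces the coefficients to alternate
    have hflip : ∀ n, 1 ≤ n → c (n + 1) = 1 - c n := by
      intro n hn
      have c2 := hc (n + 1) (by omega)
      have m1 := hmh n; rw [hhrec n hn, le_div_iff₀ c2.1] at m1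
      have m2 := hmht n
      rw [hhtrec n hn, le_div_iff₀ (by linarith [c2.2] : (0:ℝ) < 1 - c (n + 1))] at m2
      have le1 : c (n + 1) ≤ 1 - c n := by nlinarith [hpos n]
      have le2 : 1 - c (n + 1) ≤ c n := by nlinarith [htpos n]
      linarith
    have hc2 : c 2 = 1 - c 1 := by
      have := hflip 1 le_rfl; norm_num at this; exact this
    have hc3 : c 3 = c 1 := by
      have := hflip 2 (by omega); norm_num at this; rw [this, hc2]; ring
    have c1b := hc 1 le_rfl
    -- extract `c 1 ≤ 1/2` from NonnegLin P
    have hPle : c 1 ≤ 1 / 2 := by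
      have r1 : X * P 1 = C (1 - c 1) * P 2 + C (c 1) * P 0 := hPr 1 le_rfl
      have r2 : X * P 2 = C (c 1) * P 3 + C (1 - c 1) * P 1 := by
        have := hPr 2 (by omega)
        rw [hc2, show (1:ℝ) - (1 - c 1) = c 1 from by ring] at this; exact this
      have r3 : X * P 3 = C (1 - c 1) * P 4 + C (c 1) * P 2 := by
        have := hPr 3 (by omega)
        rw [hc3] at this; exact this
      obtain ⟨g, hg, hE⟩ := hNLP 2 2
      exact keylem (c 1) c1b.1 c1b.2 P hP0 hP1 r1 r2 r3 g (hg 2 (by omega)) hE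
    -- extract `1 - c 1 ≤ 1/2` from NonnegLin Pt
    have hPtle : 1 - c 1 ≤ 1 / 2 := by
      have r1 : X * Pt 1 = C (1 - (1 - c 1)) * Pt 2 + C (1 - c 1) * Pt 0 := by
        rw [show (1:ℝ) - (1 - c 1) = c 1 from by ring]
        exact hPtr 1 le_rfl
      have r2 : X * Pt 2 = C (1 - c 1) * Pt 3 + C (1 - (1 - c 1)) * Pt 1 := by
        rw [show (1:ℝ) - (1 - c 1) = c 1 from by ring]
        have := hPtr 2 (by omega)
        rw [hc2, show (1:ℝ) - (1 - c 1) = c 1 from by ring] at this; exact this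
      have r3 : X * Pt 3 = C (1 - (1 - c 1)) * Pt 4 + C (1 - c 1) * Pt 2 := by
        rw [show (1:ℝ) - (1 - c 1) = c 1 from by ring]
        have := hPtr 3 (by omega)
        rw [hc3] at this; exact this
      obtain ⟨g, hg, hE⟩ := hNLPt 2 2
      exact keylem (1 - c 1) (by linarith [c1b.2]) (by linarith [c1b.1]) Pt hPt0 hPt1
        r1 r2 r3 g (hg 2 (by omega)) hE
    have hc1 : c 1 = 1 / 2 := by linarith
    intro n hn
    induction n, hn using Nat.le_induction with
    | base => exact hc1
    | succ n hn ih => rw [hflip n hn, ih]; norm_num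
  · intro hhalf
    have hrP : ∀ l : ℕ, X * P (l + 1) = C (1/2 : ℝ) * P (l + 2) + C (1/2 : ℝ) * P l := by
      intro l
      have hh := hPr (l + 1) (by omega)
      rw [hhalf (l + 1) (by omega), show l + 1 + 1 = l + 2 from by omega,
        show l + 1 - 1 = l from by omega, show (1:ℝ) - 1/2 = 1/2 from by norm_num] at hh
      exact hh
    have hrPt : ∀ l : ℕ, X * Pt (l + 1) = C (1/2 : ℝ) * Pt (l + 2) + C (1/2 : ℝ) * Pt l := by
      intro l
      have hh := hPtr (l + 1) (by omega)
      rw [hhalf (l + 1) (by omega), show l + 1 + 1 = l + 2 from by omega,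
        show l + 1 - 1 = l from by omega, show (1:ℝ) - 1/2 = 1/2 from by norm_num] at hh
      exact hh
    refine ⟨NL_of_cheb P hP0 hP1 hrP, NL_of_cheb Pt hPt0 hPt1 hrPt, ?_, ?_⟩
    · intro n
      rcases Nat.eq_zero_or_pos n with rfl | hn
      · rw [hh0, hh1, hhalf 1 le_rfl]; norm_num
      · rw [hhrec n hn, hhalf n hn, hhalf (n + 1) (by omega)]; norm_num
    · intro n
      rcases Nat.eq_zero_or_pos n with rfl | hn
      · rw [hht0, hht1, hhalf 1 le_rfl]; norm_num
      · rw [hhtrec n hn, hhalf n hn, hhalf (n + 1) (by omega)]; norm_num
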